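/- Let 𝒴 = {(X_i, Y_i) : i<n} be a finite family where each X_i ⊆ 𝔹 is linearly independent and each Y_i is suitable for X_i, and let A ⊆ 𝔹. Let ⟨a_j : j<M⟩ be a (𝒴,M)-witness for the adequacy of A, and let ⟨b_i : i<m⟩ be an m-sequence of pairwise disjoint nonempty subsets of M. Define ⟨c_j : j<m⟩ by c_j = ∑_{k∈b_j} a_k. Then ⟨c_j : j<m⟩ is a (𝒴,m)-witness for the adequacy of A. -/

import Mathlib

open scoped BigOperators

attribute [local instance] Classical.propDecidable

/-- The countable Boolean group, realized as `ℕ →₀ ZMod 2` (equivalently, finite subsets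
of ℕ under symmetric difference), a vector space over `𝔽₂ = ZMod 2`. -/
abbrev BoolGrp : Type := ℕ →₀ ZMod 2

/-- The set of finite sums (symmetric differences) of nonempty finite subsets of `X`. -/
def FSset (X : Set BoolGrp) : Set BoolGrp :=
  {g | ∃ S : Finset BoolGrp, S.Nonempty ∧ ↑S ⊆ X ∧ g = ∑ v ∈ S, v}

/-- The `X`-support of `y`: for linearly independent `X` and `y` in the span of `X`,
the unique finite `S ⊆ X` with `y = ∑_{v ∈ S} v` (junk value `∅` otherwise). -/
noncomputable def Xsupp (X : Set BoolGrp) (y : BoolGrp) : Finset BoolGrp :=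
  if h : ∃ S : Finset BoolGrp, ↑S ⊆ X ∧ y = ∑ v ∈ S, v then h.choose else ∅

/-- The `X`-support of a set `Y`: the union of the `X`-supports of its elements. -/
noncomputable def XsuppSet (X Y : Set BoolGrp) : Set BoolGrp :=
  ⋃ y ∈ Y, (Xsupp X y : Set BoolGrp)

/-- An `m`-witness for the suitability of `Y` for `X`: an `m`-sequence of elements of
`Y` whose `X`-supports pairwise intersect. -/
def SuitWitness (X Y : Set BoolGrp) {m : ℕ} (y : Fin m → BoolGrp) : Prop :=
  (∀ i, y i ∈ Y) ∧ ∀ i j : Fin m, i < j →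
    ((Xsupp X (y i) : Set BoolGrp) ∩ (Xsupp X (y j) : Set BoolGrp)).Nonempty

/-- `Y ⊆ FS(X)` is suitable for (linearly independent) `X` if (i) for each `m` there is
an `m`-witness for suitability, and (ii) whenever the `X`-supports of `y, y' ∈ Y` (not
necessarily distinct) intersect, the intersection is not covered by the `X`-support of
`Y \ {y, y'}`. -/
def Suitable (X Y : Set BoolGrp) : Prop :=
  Y ⊆ FSset X ∧
  (∀ m : ℕ, ∃ y : Fin m → BoolGrp, SuitWitness X Y y) ∧
  ∀ y ∈ Y, ∀ y' ∈ Y,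
    ((Xsupp X y : Set BoolGrp) ∩ (Xsupp X y' : Set BoolGrp)).Nonempty →
    (((Xsupp X y : Set BoolGrp) ∩ (Xsupp X y' : Set BoolGrp)) \
      XsuppSet X (Y \ {y, y'})).Nonempty

/-- The set of finite sums of a finite sequence `a : Fin m → BoolGrp`. -/
def FSfin {m : ℕ} (a : Fin m → BoolGrp) : Set BoolGrp :=
  {g | ∃ s : Finset (Fin m), s.Nonempty ∧ g = ∑ j ∈ s, a j}

/-- `a` is a `(𝒴, m)`-witness for the adequacy of `A`: for each `(X, Y) ∈ 𝒴`,
`FS(a) ⊆ A ∩ FS(Y)` and there is an `m`-witness `y` for the suitability of `Y` such that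
for all distinct `j, k`, `y j ∈ Y-supp(a j)` and `y j ∉ Y-supp(a k)`. -/
def AdequateWitness (𝒴 : Set (Set BoolGrp × Set BoolGrp)) (A : Set BoolGrp)
    {m : ℕ} (a : Fin m → BoolGrp) : Prop :=
  ∀ XY ∈ 𝒴, FSfin a ⊆ A ∩ FSset XY.2 ∧
    ∃ y : Fin m → BoolGrp, SuitWitness XY.1 XY.2 y ∧
      ∀ j k : Fin m, j ≠ k → y j ∈ Xsupp XY.2 (a j) ∧ y j ∉ Xsupp XY.2 (a k)

/-- `A` is `(𝒴, m)`-adequate if there is a `(𝒴, m)`-witness for its adequacy. -/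
def Adequate (𝒴 : Set (Set BoolGrp × Set BoolGrp)) (m : ℕ) (A : Set BoolGrp) : Prop :=
  ∃ a : Fin m → BoolGrp, AdequateWitness 𝒴 A a

/-- `A` is `𝒳`-adequate if it is `(𝒴, m)`-adequate for every finite `𝒴 ⊆ 𝒳` and
every `m`. -/
def XAdequate (𝒳 : Set (Set BoolGrp × Set BoolGrp)) (A : Set BoolGrp) : Prop :=
  ∀ 𝒴 ⊆ 𝒳, 𝒴.Finite → ∀ m : ℕ, Adequate 𝒴 m A

/-- A family of pairs `(X, Y)` with each `X` linearly independent and each `Y` suitable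
for `X`. -/
def GoodFamily (𝒳 : Set (Set BoolGrp × Set BoolGrp)) : Prop :=
  ∀ XY ∈ 𝒳, LinearIndependent (ZMod 2) ((↑) : XY.1 → BoolGrp) ∧ Suitable XY.1 XY.2

lemma boolgrp_add_self (x : BoolGrp) : x + x = 0 := by
  have h2 : (2 : ZMod 2) = 0 := by decide
  rw [← two_smul (ZMod 2) x, h2, zero_smul]

lemma nsmul_eq_boolgrp (n : ℕ) (v : BoolGrp) : n • v = if Odd n then v else 0 := by
  induction n with
  | zero => simp
  | succ n ih =>
    rw [succ_nsmul, ih]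
    by_cases h : Odd n <;> simp [h, Nat.odd_add_one, boolgrp_add_self]

lemma sum_sum_odd {ι : Type*} (t : Finset ι) (w : ι → Finset BoolGrp) :
    ∑ k ∈ t, ∑ v ∈ w k, v =
      ∑ v ∈ (t.biUnion w).filter (fun v => Odd ((t.filter (fun k => v ∈ w k)).card)), v := by
  classical
  have h1 : ∀ k ∈ t, ∑ v ∈ w k, v = ∑ v ∈ t.biUnion w, if v ∈ w k then v else 0 := by
    intro k hk
    rw [Finset.sum_ite_mem, Finset.inter_eq_right.mpr (Finset.subset_biUnion_of_mem w hk)]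
  rw [Finset.sum_congr rfl h1, Finset.sum_comm, Finset.sum_filter]
  refine Finset.sum_congr rfl fun v _ => ?_
  rw [← Finset.sum_filter, Finset.sum_const, nsmul_eq_boolgrp]

lemma lin_coeffs {X : Set BoolGrp} (hX : LinearIndependent (ZMod 2) ((↑) : X → BoolGrp))
    (U : Finset BoolGrp) (hU : ↑U ⊆ X) (f : BoolGrp → ZMod 2)
    (h : ∑ v ∈ U, f v • v = 0) : ∀ v ∈ U, f v = 0 := by
  classical
  rw [linearIndependent_iff'] at hX
  have inj : Function.Injective (fun v : {v // v ∈ U} => (⟨v.1, hU v.2⟩ : X)) := by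
    intro a b hab
    have h' := congrArg Subtype.val hab
    exact Subtype.ext h'
  have key := hX (U.attach.map ⟨_, inj⟩) (fun i => f i.1) ?_
  · intro v hv
    exact key ⟨v, hU hv⟩ (Finset.mem_map.mpr ⟨⟨v, hv⟩, Finset.mem_attach _ _, rfl⟩)
  · rw [Finset.sum_map]
    exact (Finset.sum_attach U fun v => f v • v).trans h

lemma Xuniq {X : Set BoolGrp} (hX : LinearIndependent (ZMod 2) ((↑) : X → BoolGrp)) :
    ∀ S T : Finset BoolGrp, ↑S ⊆ X → ↑T ⊆ X → ∑ v ∈ S, v = ∑ v ∈ T, v → S = T := by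
  classical
  intro S T hS hT h
  have hUsub : ↑(S ∪ T) ⊆ X := by
    intro v hv
    rcases Finset.mem_union.mp hv with h' | h'
    · exact hS h'
    · exact hT h'
  have key := lin_coeffs hX (S ∪ T) hUsub
      (fun v => (if v ∈ S then 1 else 0) + (if v ∈ T then 1 else 0)) ?_
  · ext v
    constructor
    · intro hv
      have := key v (Finset.mem_union_left _ hv)
      by_contra hvT
      simp [hv, hvT] at this
    · intro hv
      have := key v (Finset.mem_union_right _ hv)
      by_contra hvS
      simp [hv, hvS] at this
  · have e1 : ∑ v ∈ S ∪ T, (if v ∈ S then (1:ZMod 2) else 0) • v = ∑ v ∈ S, v := by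
      simp only [ite_smul, one_smul, zero_smul]
      rw [Finset.sum_ite_mem, Finset.union_inter_cancel_left]
    have e2 : ∑ v ∈ S ∪ T, (if v ∈ T then (1:ZMod 2) else 0) • v = ∑ v ∈ T, v := by
      simp only [ite_smul, one_smul, zero_smul]
      rw [Finset.sum_ite_mem, Finset.union_inter_cancel_right]
    calc ∑ v ∈ S ∪ T, ((if v ∈ S then (1:ZMod 2) else 0) + (if v ∈ T then 1 else 0)) • v
        = ∑ v ∈ S ∪ T, ((if v ∈ S then (1:ZMod 2) else 0) • v
            + (if v ∈ T then (1:ZMod 2) else 0) • v) := by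
          refine Finset.sum_congr rfl fun v _ => add_smul _ _ _
      _ = ∑ v ∈ S, v + ∑ v ∈ T, v := by rw [Finset.sum_add_distrib, e1, e2]
      _ = 0 := by rw [h]; exact boolgrp_add_self _

lemma Xsupp_spec {X : Set BoolGrp} {g : BoolGrp}
    (h : ∃ S : Finset BoolGrp, ↑S ⊆ X ∧ g = ∑ v ∈ S, v) :
    ↑(Xsupp X g) ⊆ X ∧ g = ∑ v ∈ Xsupp X g, v := by
  rw [Xsupp, dif_pos h]
  exact h.choose_spec

lemma Xsupp_eq {X : Set BoolGrp}
    (huniq : ∀ S T : Finset BoolGrp, ↑S ⊆ X → ↑T ⊆ X → ∑ v ∈ S, v = ∑ v ∈ T, v → S = T)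
    {g : BoolGrp} {S : Finset BoolGrp} (hS : ↑S ⊆ X) (hg : g = ∑ v ∈ S, v) :
    Xsupp X g = S := by
  obtain ⟨h1, h2⟩ := Xsupp_spec ⟨S, hS, hg⟩
  exact huniq _ _ h1 hS (by rw [← h2, hg])

lemma Ysum_ne {X Y : Set BoolGrp}
    (hX : LinearIndependent (ZMod 2) ((↑) : X → BoolGrp)) (hs : Suitable X Y)
    (D : Finset BoolGrp) (hD : ↑D ⊆ Y) (hne : D.Nonempty) : ∑ y ∈ D, y ≠ 0 := by
  classical
  intro h0
  obtain ⟨y₀, hy₀⟩ := hne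
  have hy₀Y : y₀ ∈ Y := hD hy₀
  obtain ⟨S0, hS0ne, hS0sub, hS0sum⟩ := hs.1 hy₀Y
  have hsupp0 : Xsupp X y₀ = S0 := Xsupp_eq (Xuniq hX) hS0sub hS0sum
  obtain ⟨x0, hx0⟩ := hS0ne
  have hinter : ((Xsupp X y₀ : Set BoolGrp) ∩ (Xsupp X y₀ : Set BoolGrp)).Nonempty :=
    ⟨x0, by
      rw [hsupp0]
      exact ⟨Finset.mem_coe.mpr hx0, Finset.mem_coe.mpr hx0⟩⟩
  obtain ⟨x, hxmem, hxnot⟩ := hs.2.2 y₀ hy₀Y y₀ hy₀Y hinter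
  have hxsupp : x ∈ Xsupp X y₀ := Finset.mem_coe.mp hxmem.1
  have hxnot' : ∀ y ∈ Y, y ≠ y₀ → x ∉ Xsupp X y := by
    intro y hy hyne hxy
    refine hxnot ?_
    rw [XsuppSet]
    exact Set.mem_biUnion (show y ∈ Y \ {y₀, y₀} from ⟨hy, by simp [hyne]⟩)
      (Finset.mem_coe.mpr hxy)
  have hrep : ∀ y ∈ D, y = ∑ v ∈ Xsupp X y, v := by
    intro y hy
    obtain ⟨S, _, h1, h2⟩ := hs.1 (hD hy)
    exact (Xsupp_spec ⟨S, h1, h2⟩).2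
  have h0' : ∑ y ∈ D, ∑ v ∈ Xsupp X y, v = 0 := (Finset.sum_congr rfl hrep).symm.trans h0
  rw [sum_sum_odd] at h0'
  have hEsub : ↑((D.biUnion fun y => Xsupp X y).filter
      (fun v => Odd ((D.filter fun k => v ∈ Xsupp X k).card))) ⊆ X := by
    intro v hv
    have hv' := Finset.mem_filter.mp (Finset.mem_coe.mp hv)
    obtain ⟨y, hy, hvy⟩ := Finset.mem_biUnion.mp hv'.1
    obtain ⟨S, _, h1, h2⟩ := hs.1 (hD hy)
    exact (Xsupp_spec ⟨S, h1, h2⟩).1 (Finset.mem_coe.mpr hvy)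
  have hE := Xuniq hX _ ∅ hEsub (by simp) (by simpa using h0')
  have hfilt : D.filter (fun y => x ∈ Xsupp X y) = {y₀} := by
    ext y
    simp only [Finset.mem_filter, Finset.mem_singleton]
    constructor
    · rintro ⟨hy, hxy⟩
      by_contra hyne
      exact hxnot' y (hD hy) hyne hxy
    · rintro rfl
      exact ⟨hy₀, hxsupp⟩
  have hxE : x ∈ (D.biUnion fun y => Xsupp X y).filter
      (fun v => Odd ((D.filter fun k => v ∈ Xsupp X k).card)) := by
    refine Finset.mem_filter.mpr ⟨Finset.mem_biUnion.mpr ⟨y₀, hy₀, hxsupp⟩, ?_⟩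
    rw [hfilt]
    simp
  rw [hE] at hxE
  exact absurd hxE (Finset.notMem_empty x)

lemma Yuniq {X Y : Set BoolGrp}
    (hX : LinearIndependent (ZMod 2) ((↑) : X → BoolGrp)) (hs : Suitable X Y) :
    ∀ S T : Finset BoolGrp, ↑S ⊆ Y → ↑T ⊆ Y → ∑ v ∈ S, v = ∑ v ∈ T, v → S = T := by
  classical
  intro S T hS hT h
  by_contra hne
  have hdisj : Disjoint (S \ T) (T \ S) := by
    rw [Finset.disjoint_left]
    intro v hv1 hv2
    exact (Finset.mem_sdiff.mp hv2).2 (Finset.mem_sdiff.mp hv1).1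
  have hDne : ((S \ T) ∪ (T \ S)).Nonempty := by
    rw [Finset.nonempty_iff_ne_empty]
    intro hE
    obtain ⟨h1, h2⟩ := Finset.union_eq_empty.mp hE
    exact hne (Finset.Subset.antisymm (Finset.sdiff_eq_empty_iff_subset.mp h1)
      (Finset.sdiff_eq_empty_iff_subset.mp h2))
  have e1 := Finset.sum_inter_add_sum_sdiff S T (fun v => v)
  have e2 := Finset.sum_inter_add_sum_sdiff T S (fun v => v)
  rw [Finset.inter_comm] at e2
  have hdiffeq : ∑ v ∈ S \ T, v = ∑ v ∈ T \ S, v :=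
    add_left_cancel (e1.trans (h.trans e2.symm))
  refine Ysum_ne hX hs ((S \ T) ∪ (T \ S)) ?_ hDne ?_
  · intro v hv
    rcases Finset.mem_union.mp (Finset.mem_coe.mp hv) with h' | h'
    · exact hS (Finset.mem_coe.mpr (Finset.mem_sdiff.mp h').1)
    · exact hT (Finset.mem_coe.mpr (Finset.mem_sdiff.mp h').1)
  · rw [Finset.sum_union hdisj, hdiffeq]
    exact boolgrp_add_self _

/-- Condensing witnesses: if `a` is a `(𝒴, M)`-witness for the adequacy of `A` and
`b` is an `m`-sequence of pairwise disjoint nonempty subsets of `M`, then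
`c j = ∑_{k ∈ b j} a k` defines a `(𝒴, m)`-witness for the adequacy of `A`. -/
theorem adequateWitness_condense (𝒴 : Set (Set BoolGrp × Set BoolGrp))
    (h𝒴 : 𝒴.Finite) (hgood : GoodFamily 𝒴) (A : Set BoolGrp) (M m : ℕ)
    (a : Fin M → BoolGrp) (ha : AdequateWitness 𝒴 A a)
    (b : Fin m → Finset (Fin M)) (hbne : ∀ j, (b j).Nonempty)
    (hbd : ∀ j k : Fin m, j ≠ k → Disjoint (b j) (b k)) :
    AdequateWitness 𝒴 A (fun j => ∑ k ∈ b j, a k) := by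
  classical
  intro XY hXY
  obtain ⟨hX, hYsuit⟩ := hgood XY hXY
  obtain ⟨hsub, y, hy, hykey⟩ := ha XY hXY
  have hFS : FSfin (fun j => ∑ k ∈ b j, a k) ⊆ FSfin a := by
    rintro g ⟨s, hsne, rfl⟩
    refine ⟨s.biUnion b, ?_, ?_⟩
    · obtain ⟨j, hj⟩ := hsne
      obtain ⟨k, hk⟩ := hbne j
      exact ⟨k, Finset.mem_biUnion.mpr ⟨j, hj, hk⟩⟩
    · exact (Finset.sum_biUnion (fun j _ k _ hjk => hbd j k hjk)).symm
  refine ⟨fun g hg => hsub (hFS hg), ?_⟩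
  have haFS : ∀ k : Fin M, ∃ S : Finset BoolGrp, ↑S ⊆ XY.2 ∧ a k = ∑ v ∈ S, v := by
    intro k
    obtain ⟨S, -, h1, h2⟩ :=
      (hsub ⟨{k}, Finset.singleton_nonempty k, (Finset.sum_singleton a k).symm⟩).2
    exact ⟨S, h1, h2⟩
  have hSspec : ∀ k, ↑(Xsupp XY.2 (a k)) ⊆ XY.2 ∧ a k = ∑ v ∈ Xsupp XY.2 (a k), v :=
    fun k => Xsupp_spec (haFS k)
  choose kf hkfmem using hbne
  have hkfne : ∀ j k : Fin m, j ≠ k → kf j ≠ kf k := by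
    intro j k hjk h
    exact Finset.disjoint_left.mp (hbd j k hjk) (hkfmem j) (h ▸ hkfmem k)
  have hc : ∀ j : Fin m, Xsupp XY.2 (∑ k ∈ b j, a k) =
      ((b j).biUnion fun k => Xsupp XY.2 (a k)).filter
        (fun v => Odd (((b j).filter fun k => v ∈ Xsupp XY.2 (a k)).card)) := by
    intro j
    refine Xsupp_eq (Yuniq hX hYsuit) ?_ ?_
    · intro v hv
      have hv' := Finset.mem_filter.mp (Finset.mem_coe.mp hv)
      obtain ⟨k, hk, hvk⟩ := Finset.mem_biUnion.mp hv'.1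
      exact (hSspec k).1 (Finset.mem_coe.mpr hvk)
    · calc ∑ k ∈ b j, a k = ∑ k ∈ b j, ∑ v ∈ Xsupp XY.2 (a k), v :=
            Finset.sum_congr rfl fun k _ => (hSspec k).2
        _ = _ := sum_sum_odd _ _
  refine ⟨fun j => y (kf j), ⟨fun j => hy.1 (kf j), ?_⟩, ?_⟩
  · intro i j hij
    rcases (hkfne i j hij.ne).lt_or_gt with h | h
    · exact hy.2 _ _ h
    · obtain ⟨x, hx1, hx2⟩ := hy.2 _ _ h
      exact ⟨x, hx2, hx1⟩
  · intro j k hjk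
    have hin : y (kf j) ∈ Xsupp XY.2 (a (kf j)) := (hykey (kf j) (kf k) (hkfne j k hjk)).1
    have hout : ∀ l : Fin M, l ≠ kf j → y (kf j) ∉ Xsupp XY.2 (a l) := by
      intro l hl
      exact (hykey (kf j) l (Ne.symm hl)).2
    constructor
    · show y (kf j) ∈ Xsupp XY.2 (∑ k ∈ b j, a k)
      rw [hc j]
      refine Finset.mem_filter.mpr ⟨Finset.mem_biUnion.mpr ⟨kf j, hkfmem j, hin⟩, ?_⟩
      have hfilt : (b j).filter (fun l => y (kf j) ∈ Xsupp XY.2 (a l)) = {kf j} := by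
        ext l
        simp only [Finset.mem_filter, Finset.mem_singleton]
        constructor
        · rintro ⟨hl, hyl⟩
          by_contra hlne
          exact hout l hlne hyl
        · rintro rfl
          exact ⟨hkfmem j, hin⟩
      rw [hfilt]
      simp
    · show y (kf j) ∉ Xsupp XY.2 (∑ l ∈ b k, a l)
      rw [hc k]
      intro hmem
      obtain ⟨l, hl, hyl⟩ := Finset.mem_biUnion.mp (Finset.mem_filter.mp hmem).1
      have hlne : l ≠ kf j := by
        intro h
        exact Finset.disjoint_left.mp (hbd j k hjk) (hkfmem j) (h ▸ hl)
      exact hout l hlne hyl
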